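/- Let G be a forest, i.e., a finite simple graph with no cycles (acyclic). Then for every integer i ≥ 1, B_i(G) = Σ_{v ∈ V} C(deg v, i+1). -/

import Mathlib

open Finset

/-- The `i`-th Betti number in the linear strand of the edge ideal of `G`:
`B_i(G) = Σ_{S ⊆ V, |S| = i+2} (#components of the complement of G[S] − 1)`. -/
noncomputable def linStrand {V : Type*} [Fintype V] [DecidableEq V]
    (G : SimpleGraph V) (i : ℕ) : ℕ :=
  ∑ S ∈ (Finset.univ : Finset V).powersetCard (i + 2),
    (Nat.card ((G.induce (S : Set V))ᶜ.ConnectedComponent) - 1)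

section Helpers

open SimpleGraph

variable {V : Type*} {G : SimpleGraph V}

lemma noTri (hG : G.IsAcyclic) {a b c : V} (hab : G.Adj a b) (hbc : G.Adj b c)
    (hac : G.Adj a c) : False := by
  have hp1 : (Walk.cons hab Walk.nil).IsPath := by simp [hab.ne]
  have hp2 : (Walk.cons hac (Walk.cons hbc.symm Walk.nil)).IsPath := by
    simp [hab.ne, hac.ne, hbc.ne']
  have h := hG.path_unique ⟨_, hp1⟩ ⟨_, hp2⟩
  simpa using congrArg (fun p : G.Path a b => p.1.length) h

lemma starCard (hG : G.IsAcyclic) [DecidableEq V] {S : Finset V} {v : V}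
    (hv : v ∈ S) (hstar : ∀ w ∈ S, w ≠ v → G.Adj v w) (h3 : 3 ≤ S.card) :
    Nat.card ((G.induce (S : Set V))ᶜ.ConnectedComponent) = 2 := by
  set H := (G.induce (S : Set V))ᶜ with hH
  have hadjH : ∀ x y : (S : Set V), H.Adj x y ↔ x ≠ y ∧ ¬ G.Adj (x : V) (y : V) := by
    intro x y
    rw [hH, compl_adj]
    exact Iff.rfl
  have hmem : ∀ x : (S : Set V), (x : V) ∈ S := fun x => by exact_mod_cast x.2
  have hne : ∀ x y : (S : Set V), H.Adj x y → ((x : V) ≠ v ∧ (y : V) ≠ v) := by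
    intro x y hxy
    rw [hadjH] at hxy
    obtain ⟨hxy1, hxy2⟩ := hxy
    refine ⟨?_, ?_⟩
    · rintro rfl
      exact hxy2 (hstar _ (hmem y) (fun h => hxy1 (Subtype.ext h.symm)))
    · rintro rfl
      exact hxy2 ((hstar _ (hmem x) (fun h => hxy1 (Subtype.ext h))).symm)
  have hg : ∀ (x y : (S : Set V)) (p : H.Walk x y), p.IsPath →
      (decide ((x : V) = v)) = (decide ((y : V) = v)) := by
    intro x y p _hp
    induction p with
    | nil => rfl
    | @cons a b c h p ih =>
      have h1 := hne _ _ h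
      have h2 := ih _hp.of_cons
      rw [decide_eq_decide] at h2 ⊢
      exact ⟨fun ha => absurd ha h1.1, fun hc => absurd (h2.mpr hc) h1.2⟩
  let g : H.ConnectedComponent → Bool :=
    ConnectedComponent.lift (fun x => decide ((x : V) = v)) hg
  have hvS : v ∈ (S : Set V) := by exact_mod_cast hv
  have hbij : Function.Bijective g := by
    constructor
    · refine ConnectedComponent.ind₂ (fun x y hxy => ?_)
      simp only [g, ConnectedComponent.lift_mk, decide_eq_decide] at hxy
      by_cases hx : (x : V) = v
      · have hy : (y : V) = v := hxy.mp hx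
        exact congrArg _ (Subtype.ext (hx.trans hy.symm))
      · have hy : ¬ (y : V) = v := fun h => hx (hxy.mpr h)
        by_cases hxyeq : x = y
        · exact congrArg _ hxyeq
        · refine ConnectedComponent.sound (Adj.reachable ?_)
          rw [hadjH]
          refine ⟨hxyeq, fun hadj => ?_⟩
          exact noTri hG (hstar _ (hmem x) hx) hadj (hstar _ (hmem y) hy)
    · intro b
      cases b with
      | true => exact ⟨H.connectedComponentMk ⟨v, hvS⟩, by simp [g]⟩
      | false =>
          obtain ⟨w, hw, hwv⟩ : ∃ w ∈ S, w ≠ v := by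
            refine Finset.exists_mem_ne (by omega) v
          exact ⟨H.connectedComponentMk ⟨w, by exact_mod_cast hw⟩, by simp [g, hwv]⟩
  have := Nat.card_eq_of_bijective g hbij
  simpa [Nat.card_eq_fintype_card] using this


lemma noC4 (hG : G.IsAcyclic) {a b c d : V} (hab : G.Adj a b) (hbc : G.Adj b c)
    (hcd : G.Adj c d) (hda : G.Adj d a) (hac : a ≠ c) (hbd : b ≠ d) : False := by
  have hp1 : (Walk.cons hab (Walk.cons hbc Walk.nil)).IsPath := by
    simp [hab.ne, hbc.ne, hac]
  have hp2 : (Walk.cons hda.symm (Walk.cons hcd.symm Walk.nil)).IsPath := by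
    simp [hda.ne', hcd.ne', hac, Ne.symm hac]
  have h := hG.path_unique ⟨_, hp1⟩ ⟨_, hp2⟩
  have := congrArg (fun p : G.Path a c => p.1.support) h
  simp at this
  exact hbd this


lemma nonStarCard (hG : G.IsAcyclic) [DecidableEq V] {S : Finset V}
    (hns : ¬ ∃ v ∈ S, ∀ w ∈ S, w ≠ v → G.Adj v w) (h3 : 3 ≤ S.card) :
    Nat.card ((G.induce (S : Set V))ᶜ.ConnectedComponent) = 1 := by
  set H := (G.induce (S : Set V))ᶜ with hH
  have hadjH : ∀ x y : (S : Set V), H.Adj x y ↔ x ≠ y ∧ ¬ G.Adj (x : V) (y : V) := by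
    intro x y
    rw [hH, compl_adj]
    exact Iff.rfl
  have hmem : ∀ x : (S : Set V), (x : V) ∈ S := fun x => by exact_mod_cast x.2
  push_neg at hns
  have hpre : H.Preconnected := by
    intro x y
    by_cases hxy : x = y
    · subst hxy; rfl
    by_cases hna : G.Adj (x : V) (y : V)
    case neg => exact (Adj.reachable ((hadjH x y).mpr ⟨hxy, hna⟩))
    by_cases hz : ∃ z ∈ S, z ≠ (x : V) ∧ z ≠ (y : V) ∧ ¬ G.Adj (x : V) z ∧ ¬ G.Adj (y : V) z
    · obtain ⟨z, hzS, hzx, hzy, h1, h2⟩ := hz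
      have hzS' : z ∈ (S : Set V) := by exact_mod_cast hzS
      have e1 : H.Adj x ⟨z, hzS'⟩ := (hadjH _ _).mpr ⟨fun h => hzx (congrArg Subtype.val h.symm), h1⟩
      have e2 : H.Adj ⟨z, hzS'⟩ y := (hadjH _ _).mpr
        ⟨fun h => hzy (congrArg Subtype.val h), fun h => h2 h.symm⟩
      exact e1.reachable.trans e2.reachable
    · push_neg at hz
      obtain ⟨a, haS, hax, hxa⟩ := hns (x : V) (hmem x)
      have hay : a ≠ (y : V) := fun h => by subst h; exact hxa hna
      have hya : G.Adj (y : V) a := hz a haS hax hay hxa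
      obtain ⟨b, hbS, hby, hyb⟩ := hns (y : V) (hmem y)
      have hbx : b ≠ (x : V) := fun h => by subst h; exact hyb hna.symm
      have hxb : G.Adj (x : V) b := by
        by_contra hxb
        exact hyb (hz b hbS hbx hby hxb)
      have hne_ab : a ≠ b := fun h => hyb (h ▸ hya)
      have hab : ¬ G.Adj a b := by
        intro hab
        -- 4-cycle: x - y - a - b - x ; edges: Adj x y, Adj y a, Adj a b, Adj b x
        exact noC4 hG hna hya hab hxb.symm (Ne.symm hax) (Ne.symm hby)
      have haS' : a ∈ (S : Set V) := by exact_mod_cast haS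
      have hbS' : b ∈ (S : Set V) := by exact_mod_cast hbS
      have e1 : H.Adj x ⟨a, haS'⟩ := (hadjH _ _).mpr ⟨fun h => hax (congrArg Subtype.val h).symm, hxa⟩
      have e2 : H.Adj ⟨a, haS'⟩ ⟨b, hbS'⟩ := (hadjH _ _).mpr
        ⟨fun h => hne_ab (congrArg Subtype.val h), hab⟩
      have e3 : H.Adj ⟨b, hbS'⟩ y := (hadjH _ _).mpr ⟨fun h => hby (congrArg Subtype.val h), fun h => hyb h.symm⟩
      exact (e1.reachable.trans e2.reachable).trans e3.reachable
  have hne : Nonempty ((S : Set V)) := by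
    have : S.Nonempty := Finset.card_pos.mp (by omega)
    exact ⟨⟨this.choose, by exact_mod_cast this.choose_spec⟩⟩
  rw [Nat.card_eq_one_iff_unique]
  exact ⟨hpre.subsingleton_connectedComponent, ⟨H.connectedComponentMk hne.some⟩⟩


end Helpers

open SimpleGraph in
/-- If `G` is a forest (an acyclic finite simple graph), then for every `i ≥ 1`,
`B_i(G) = Σ_{v ∈ V} C(deg v, i+1)`. -/
theorem linStrand_of_isAcyclic
    {V : Type*} [Fintype V] [DecidableEq V] (G : SimpleGraph V) [DecidableRel G.Adj]
    (hG : G.IsAcyclic) (i : ℕ) (hi : 1 ≤ i) :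
    linStrand G i = ∑ v : V, (G.degree v).choose (i + 1) := by

  classical
  unfold linStrand
  have key : ∀ S ∈ (Finset.univ : Finset V).powersetCard (i + 2),
      Nat.card ((G.induce (S : Set V))ᶜ.ConnectedComponent) - 1
        = if ∃ v ∈ S, ∀ w ∈ S, w ≠ v → G.Adj v w then 1 else 0 := by
    intro S hS
    have hcard : S.card = i + 2 := (Finset.mem_powersetCard.mp hS).2
    by_cases h : ∃ v ∈ S, ∀ w ∈ S, w ≠ v → G.Adj v w
    · obtain ⟨v, hv, hstar⟩ := h
      rw [if_pos ⟨v, hv, hstar⟩, starCard hG hv hstar (by omega)]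
    · rw [if_neg h, nonStarCard hG h (by omega)]
  rw [Finset.sum_congr rfl key, ← Finset.card_filter]
  have hrhs : ∑ v : V, (G.degree v).choose (i + 1)
      = ((univ : Finset V).sigma fun v => (G.neighborFinset v).powersetCard (i+1)).card := by
    rw [Finset.card_sigma]
    refine Finset.sum_congr rfl (fun v _ => ?_)
    rw [Finset.card_powersetCard, card_neighborFinset_eq_degree]
  rw [hrhs]
  refine (Finset.card_bij (fun p _ => insert p.1 p.2) ?_ ?_ ?_).symm
  · -- maps into filter
    rintro ⟨v, T⟩ hp
    rw [Finset.mem_sigma, Finset.mem_powersetCard] at hp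
    obtain ⟨-, hTsub, hTcard⟩ := hp
    have hvT : v ∉ T := fun h => G.irrefl (mem_neighborFinset G v v |>.mp (hTsub h))
    rw [Finset.mem_filter, Finset.mem_powersetCard]
    refine ⟨⟨Finset.subset_univ _, ?_⟩, ⟨v, Finset.mem_insert_self v T, fun w hw hwv => ?_⟩⟩
    · rw [Finset.card_insert_of_notMem hvT, hTcard]
    · rcases Finset.mem_insert.mp hw with h | h
      · exact absurd h hwv
      · exact (mem_neighborFinset G v w).mp (hTsub h)
  · -- injective
    rintro ⟨v₁, T₁⟩ h₁ ⟨v₂, T₂⟩ h₂ heq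
    simp only at heq
    rw [Finset.mem_sigma, Finset.mem_powersetCard] at h₁ h₂
    obtain ⟨-, hT₁, hc₁⟩ := h₁
    obtain ⟨-, hT₂, hc₂⟩ := h₂
    have hv₁ : v₁ ∉ T₁ := fun h => G.irrefl ((mem_neighborFinset G v₁ v₁).mp (hT₁ h))
    have hv₂ : v₂ ∉ T₂ := fun h => G.irrefl ((mem_neighborFinset G v₂ v₂).mp (hT₂ h))
    have hvv : v₁ = v₂ := by
      by_contra hne
      have hv₂mem : v₂ ∈ T₁ := by
        have : v₂ ∈ insert v₁ T₁ := heq ▸ Finset.mem_insert_self v₂ T₂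
        exact (Finset.mem_insert.mp this).resolve_left (fun h => hne h.symm)
      have hadj12 : G.Adj v₁ v₂ := (mem_neighborFinset G v₁ v₂).mp (hT₁ hv₂mem)
      -- find third vertex
      have : ((T₁.erase v₂)).Nonempty := by
        rw [← Finset.card_pos, Finset.card_erase_of_mem hv₂mem, hc₁]
        omega
      obtain ⟨w, hw⟩ := this
      have hwv₂ : w ≠ v₂ := Finset.ne_of_mem_erase hw
      have hwT₁ : w ∈ T₁ := Finset.mem_of_mem_erase hw
      have hadj1w : G.Adj v₁ w := (mem_neighborFinset G v₁ w).mp (hT₁ hwT₁)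
      have hwmem : w ∈ insert v₂ T₂ := heq ▸ Finset.mem_insert_of_mem hwT₁
      have hwT₂ : w ∈ T₂ := (Finset.mem_insert.mp hwmem).resolve_left hwv₂
      have hadj2w : G.Adj v₂ w := (mem_neighborFinset G v₂ w).mp (hT₂ hwT₂)
      exact noTri hG hadj12 hadj2w hadj1w
    subst hvv
    have hT : T₁ = T₂ := by
      have := congrArg (fun s => Finset.erase s v₁) heq
      simpa [Finset.erase_insert hv₁, Finset.erase_insert hv₂] using this
    subst hT; rfl
  · -- surjective
    intro S hS
    rw [Finset.mem_filter, Finset.mem_powersetCard] at hS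
    obtain ⟨⟨-, hcard⟩, v, hv, hstar⟩ := hS
    refine ⟨⟨v, S.erase v⟩, ?_, ?_⟩
    · rw [Finset.mem_sigma, Finset.mem_powersetCard]
      refine ⟨Finset.mem_univ v, fun w hw => ?_, ?_⟩
      · exact (mem_neighborFinset G v w).mpr
          (hstar w (Finset.mem_of_mem_erase hw) (Finset.ne_of_mem_erase hw))
      · rw [Finset.card_erase_of_mem hv, hcard]; omega
    · exact Finset.insert_erase hv
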